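/- Assume S is convex. Then at each axial fixed point u_i the principal eigenvalue is smaller than both external eigenvalues: (DP(u_i))_{ii} < (DP(u_i))_{jj} for each j ≠ i. -/

import Mathlib

open Set Filter Metric MeasureTheory

noncomputable section

/-- The ambient space: ℝ³ with the Euclidean norm. -/
abbrev V3 : Type := EuclideanSpace ℝ (Fin 3)

/-- Standard basis vectors. -/
def e3 (i : Fin 3) : V3 := EuclideanSpace.single i 1

/-- The non-negative octant `C`. -/
def octC : Set V3 := {x | ∀ i, 0 ≤ x i}

/-- The interior of the octant, `C°`. -/
def octInt : Set V3 := {x | ∀ i, 0 < x i}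

/-- The coordinate subspace `H_I`. -/
def planeH (I : Finset (Fin 3)) : Set V3 := {x | ∀ j ∉ I, x j = 0}

/-- The face `H_I⁺ = C ∩ H_I` (as a set of points, or the cone `K_I` of vectors). -/
def faceH (I : Finset (Fin 3)) : Set V3 := octC ∩ planeH I

/-- The relative interior `Ḣ_I⁺` (resp. `K̇_I`). -/
def faceDot (I : Finset (Fin 3)) : Set V3 := {x ∈ faceH I | ∀ i ∈ I, 0 < x i}

/-- The relative boundary `∂H_I⁺`. -/
def faceBd (I : Finset (Fin 3)) : Set V3 := faceH I \ faceDot I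

/-- The Jacobian matrix `DP(x)` of a map `P` at `x`. -/
def jacM (P : V3 → V3) (x : V3) : Matrix (Fin 3) (Fin 3) ℝ :=
  Matrix.of fun i j => (fderiv ℝ P x (e3 j)) i

/-- The `I × I` submatrix of a `3 × 3` matrix. -/
def subM (I : Finset (Fin 3)) (M : Matrix (Fin 3) (Fin 3) ℝ) :
    Matrix {i // i ∈ I} {i // i ∈ I} ℝ :=
  M.submatrix Subtype.val Subtype.val

/-- The standing hypotheses (H1), (H2), (H3′), (H4′), (H5), (H6):
`Pt` is the `C²` diffeomorphism `P̃` of an open set `U ⊇ C` onto its image,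
`Qt` its inverse, and `u i` are the axial fixed points. -/
structure CompSetting where
  U : Set V3
  Pt : V3 → V3
  Qt : V3 → V3
  u : Fin 3 → V3
  -- (H1): C² diffeomorphism of an open neighbourhood of C onto its image
  openU : IsOpen U
  octSubU : octC ⊆ U
  smooth : ContDiffOn ℝ 2 Pt U
  openImage : IsOpen (Pt '' U)
  smoothInv : ContDiffOn ℝ 2 Qt (Pt '' U)
  left_inv : ∀ x ∈ U, Qt (Pt x) = x
  right_inv : ∀ y ∈ Pt '' U, Pt (Qt y) = y
  -- (H2)
  h2 : ∀ I : Finset (Fin 3), I.Nonempty →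
    ∀ A ∈ ({faceH I, faceDot I, faceBd I} : Set (Set V3)),
      Pt '' A ⊆ A ∧ ∀ x ∈ octC, Pt x ∈ A → x ∈ A
  -- (H3′)
  h3 : ∀ I : Finset (Fin 3), I.Nonempty → ∀ x ∈ faceDot I,
      (∀ i ∈ I, ∀ j ∈ I, 0 < (jacM Pt x)⁻¹ i j) ∧
      ∀ v : Fin 3 → ℝ, (∀ j, 0 ≤ v j) → (∀ j ∈ I, v j = 0) → v ≠ 0 →
        ∃ j ∈ I, 0 < (jacM Pt x)⁻¹.mulVec v j
  -- (H4′)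
  h4_mem : ∀ i, u i ∈ faceDot {i}
  h4_fix : ∀ i, Pt (u i) = u i
  h4_unique : ∀ i, ∀ y ∈ faceDot {i}, Pt y = y → y = u i
  h4_diag : ∀ i, 0 < jacM Pt (u i) i i ∧ jacM Pt (u i) i i < 1
  h4_off : ∀ i j, j ≠ i → jacM Pt (u i) i j < 0
  -- (H5)
  h5 : ∀ I : Finset (Fin 3), I.Nonempty → ∀ x ∈ faceDot I, x ≠ 0 →
    ∀ p : ℕ, 1 ≤ p → Pt^[p] x = x →
      ∃ μ : ℝ, (μ : ℂ) ∈ spectrum ℂ ((subM I (jacM (Pt^[p]) x)).map Complex.ofReal) ∧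
        (∀ ν ∈ spectrum ℂ ((subM I (jacM (Pt^[p]) x)).map Complex.ofReal),
          |μ| ≤ ‖ν‖) ∧ μ < 1
  -- (H6)
  h6 : ∀ I : Finset (Fin 3), I.Nonempty → ∀ x ∈ faceDot I, ∀ y ∈ faceDot I,
    (∀ i ∈ I, 0 < Pt x i) → (∀ i ∈ I, Pt x i < Pt y i) →
    ∀ i ∈ I, x i / y i ≤ Pt x i / Pt y i

/-- Sum of the coordinates. -/
def sumCoords (x : V3) : ℝ := x 0 + x 1 + x 2

/-- The radial projection `R`. -/
def radProj (x : V3) : V3 := (sumCoords x)⁻¹ • x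

/-- The standard probability 2-simplex `△`. -/
def simplex2 : Set V3 := {x ∈ octC | sumCoords x = 1}

/-- The plane `{x : x₁ + x₂ + x₃ = 1}` containing `△`. -/
def plane1 : Set V3 := {x | sumCoords x = 1}

/-- The ω-limit set of `x` under `P`. -/
def omegaLim (P : V3 → V3) (x : V3) : Set V3 :=
  {y | ∃ φ : ℕ → ℕ, StrictMono φ ∧ Tendsto (fun k => P^[φ k] x) atTop (nhds y)}

/-- `Γ = {αx : α ∈ [0,1], x ∈ S}`. -/
def gammaOf (S : Set V3) : Set V3 := {y | ∃ α ∈ Icc (0:ℝ) 1, ∃ x ∈ S, y = α • x}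

/-- `S` is a carrying simplex for the map `P = Pt|_C`. -/
def IsCarryingSimplex (E : CompSetting) (S : Set V3) : Prop :=
  IsCompact S ∧ S ⊆ octC ∧ (0 : V3) ∉ S ∧ E.Pt '' S = S ∧
  -- (i) the radial projection restricts to a homeomorphism of S onto △
  (∃ h : S ≃ₜ simplex2, ∀ p : S, (h p : V3) = radProj (p : V3)) ∧
  -- (ii) unordered
  (∀ x ∈ S, ∀ y ∈ S, x ≠ y → ¬ ∀ i, x i < y i) ∧
  (∀ x ∈ S ∩ octInt, ∀ y ∈ S ∩ octInt, x ≠ y → ¬ ∀ i, x i ≤ y i) ∧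
  -- (iii) all nontrivial ω-limit sets lie in S
  (∀ x ∈ octC, x ≠ 0 → omegaLim E.Pt x ⊆ S) ∧
  -- (iv) Γ is the global attractor: compact, invariant, attracting
  IsCompact (gammaOf S) ∧ E.Pt '' gammaOf S = gammaOf S ∧
  (∀ B : Set V3, B ⊆ octC → Bornology.IsBounded B → ∀ ε > 0, ∃ n₀ : ℕ,
    ∀ n ≥ n₀, ∀ b ∈ B, E.Pt^[n] b ∈ Metric.thickening ε (gammaOf S))

/-- The set `C₁(A, x)` of limiting unit directions of `A` at `x`. -/
def dirSet (A : Set V3) (x : V3) : Set V3 :=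
  {v | ∃ s : ℕ → V3, (∀ n, s n ∈ A ∧ s n ≠ x) ∧
    Tendsto s atTop (nhds x) ∧
    Tendsto (fun n => (‖s n - x‖)⁻¹ • (s n - x)) atTop (nhds v)}

/-- The tangent cone `C(A, x) = [0, ∞) · C₁(A, x)`. -/
def tanCone (A : Set V3) (x : V3) : Set V3 :=
  {v | ∃ t : ℝ, 0 ≤ t ∧ ∃ z ∈ dirSet A x, v = t • z}

/-- `S` is a `C¹` submanifold-with-corners neatly embedded in `C`, diffeomorphic
to `△` via the radial projection: `(R|_S)⁻¹(y) = ρ(y)·y` with `ρ` a `C¹` positive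
function on a relatively open neighbourhood of `△` in the plane. -/
def NeatC1 (S : Set V3) : Prop :=
  ∃ Ut : Set V3, Ut ⊆ plane1 ∧ simplex2 ⊆ Ut ∧
    (∃ O : Set V3, IsOpen O ∧ Ut = O ∩ plane1) ∧
    ∃ ρ : V3 → ℝ, ContDiffOn ℝ 1 ρ Ut ∧ (∀ y ∈ Ut, 0 < ρ y) ∧
      ∀ y ∈ simplex2, ρ y • y ∈ S ∧ radProj (ρ y • y) = y

end


section Aux

/-- A function vanishing on the right of `0` has derivative `0` at `0`. -/
private lemma deriv_zero_of_right_zero {h : ℝ → ℝ} {D : ℝ}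
    (hd : HasDerivAt h D 0) (hz : ∀ s : ℝ, 0 ≤ s → h s = 0) : D = 0 := by
  have h0 : h 0 = 0 := hz 0 le_rfl
  have t1 : Filter.Tendsto (slope h 0) (nhdsWithin 0 (Set.Ioi 0)) (nhds D) :=
    (hasDerivAt_iff_tendsto_slope.1 hd).mono_left
      (nhdsWithin_mono _ (fun x hx => ne_of_gt hx))
  have t2 : Filter.Tendsto (slope h 0) (nhdsWithin 0 (Set.Ioi 0)) (nhds 0) := by
    apply Filter.Tendsto.congr' _ tendsto_const_nhds
    filter_upwards [self_mem_nhdsWithin] with s hs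
    simp [slope, h0, hz s (le_of_lt hs)]
  exact tendsto_nhds_unique t1 t2

end Aux

set_option maxHeartbeats 3200000

/-- If S is convex then at each axial fixed point `u i` the principal eigenvalue
is smaller than both external eigenvalues. -/
theorem axial_principal_lt_external (E : CompSetting) (S : Set V3)
    (hS : IsCarryingSimplex E S) (hconv : Convex ℝ (gammaOf S)) :
    ∀ i j : Fin 3, j ≠ i →
      jacM E.Pt (E.u i) i i < jacM E.Pt (E.u i) j j := by
  intro i j hji
  -- the third index
  obtain ⟨k, hki, hkj⟩ : ∃ k : Fin 3, k ≠ i ∧ k ≠ j := by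
    fin_cases i <;> fin_cases j <;> decide
  have hcover : ∀ l : Fin 3, l = i ∨ l = j ∨ l = k := by
    intro l
    by_contra hc
    push_neg at hc
    obtain ⟨h1, h2, h3⟩ := hc
    have e1 : l.val ≠ i.val := fun h => h1 (Fin.ext h)
    have e2 : l.val ≠ j.val := fun h => h2 (Fin.ext h)
    have e3' : l.val ≠ k.val := fun h => h3 (Fin.ext h)
    have e4 : j.val ≠ i.val := fun h => hji (Fin.ext h)
    have e5 : k.val ≠ i.val := fun h => hki (Fin.ext h)
    have e6 : k.val ≠ j.val := fun h => hkj (Fin.ext h)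
    have := l.isLt; have := i.isLt; have := j.isLt; have := k.isLt
    omega
  set u : V3 := E.u i with hu_def
  -- basic facts about u
  have hu_mem := E.h4_mem i
  have huC : u ∈ octC := hu_mem.1.1
  have hui : 0 < u i := hu_mem.2 i (Finset.mem_singleton_self i)
  have hul : ∀ l : Fin 3, l ≠ i → u l = 0 := by
    intro l hl
    exact hu_mem.1.2 l (by simp [hl])
  have huU : u ∈ E.U := E.octSubU huC
  have huPU : u ∈ E.Pt '' E.U := ⟨u, huU, E.h4_fix i⟩
  -- differentiability
  have hPdiff : DifferentiableAt ℝ E.Pt u :=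
    (E.smooth.contDiffAt (E.openU.mem_nhds huU)).differentiableAt (by norm_num)
  set Df : V3 →L[ℝ] V3 := fderiv ℝ E.Pt u with hDf_def
  have hP : HasFDerivAt E.Pt Df u := hPdiff.hasFDerivAt
  have hfix : E.Pt u = u := E.h4_fix i
  have hQu : E.Qt u = u := by
    conv_lhs => rw [← hfix]
    exact E.left_inv u huU
  have hQdiff : DifferentiableAt ℝ E.Qt u :=
    (E.smoothInv.contDiffAt (E.openImage.mem_nhds huPU)).differentiableAt (by norm_num)
  set m : V3 →L[ℝ] V3 := fderiv ℝ E.Qt u with hm_def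
  have hQ : HasFDerivAt E.Qt m u := hQdiff.hasFDerivAt
  -- chain rules
  have hQP : ∀ v : V3, m (Df v) = v := by
    have e1 : (fun x => E.Qt (E.Pt x)) =ᶠ[nhds u] id := by
      filter_upwards [E.openU.mem_nhds huU] with x hx
      exact E.left_inv x hx
    have e2 : fderiv ℝ (fun x => E.Qt (E.Pt x)) u = fderiv ℝ (id : V3 → V3) u :=
      e1.fderiv_eq
    have e3 : fderiv ℝ (fun x => E.Qt (E.Pt x)) u = m.comp Df := by
      have hQ' : DifferentiableAt ℝ E.Qt (E.Pt u) := by rw [hfix]; exact hQdiff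
      have := fderiv_comp (𝕜 := ℝ) u hQ' hPdiff
      rw [Function.comp_def] at this
      rw [this, hfix]
    intro v
    have := e3.symm.trans e2
    have hv := congrArg (fun (L : V3 →L[ℝ] V3) => L v) this
    simpa using hv
  have hPQ : ∀ v : V3, Df (m v) = v := by
    have e1 : (fun x => E.Pt (E.Qt x)) =ᶠ[nhds u] id := by
      filter_upwards [E.openImage.mem_nhds huPU] with x hx
      exact E.right_inv x hx
    have e2 : fderiv ℝ (fun x => E.Pt (E.Qt x)) u = fderiv ℝ (id : V3 → V3) u :=
      e1.fderiv_eq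
    have e3 : fderiv ℝ (fun x => E.Pt (E.Qt x)) u = Df.comp m := by
      have hP' : DifferentiableAt ℝ E.Pt (E.Qt u) := by rw [hQu]; exact hPdiff
      have := fderiv_comp (𝕜 := ℝ) u hP' hQdiff
      rw [Function.comp_def] at this
      rw [this, hQu]
    intro v
    have := e3.symm.trans e2
    have hv := congrArg (fun (L : V3 →L[ℝ] V3) => L v) this
    simpa using hv
  -- column structure of the Jacobian
  have hcol : ∀ q l : Fin 3, l ≠ i → l ≠ q → Df (e3 q) l = 0 := by
    intro q l hli hlq
    have hIne : (insert i {q} : Finset (Fin 3)).Nonempty := ⟨i, Finset.mem_insert_self i {q}⟩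
    have hface := (E.h2 (insert i {q}) hIne (faceH (insert i {q})) (Set.mem_insert _ _)).1
    have hsub : ∀ s : ℝ, 0 ≤ s → (u + s • e3 q) ∈ faceH (insert i {q}) := by
      intro s hs
      constructor
      · intro l'
        have hC := huC l'
        simp only [PiLp.add_apply, PiLp.smul_apply, e3, EuclideanSpace.single_apply,
          smul_eq_mul]
        by_cases hq : l' = q
        · rw [if_pos hq]; nlinarith
        · rw [if_neg hq]; simpa using hC
      · intro l' hl'
        have h1 : l' ≠ i := by
          intro h; exact hl' (h ▸ Finset.mem_insert_self i {q})
        have h2 : l' ≠ q := by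
          intro h
          exact hl' (by rw [h]; exact Finset.mem_insert_of_mem (Finset.mem_singleton_self q))
        simp only [PiLp.add_apply, PiLp.smul_apply, e3, EuclideanSpace.single_apply,
          smul_eq_mul, hul l' h1, if_neg h2, mul_zero, add_zero]
    have hcurve : HasDerivAt (fun s : ℝ => u + s • e3 q) (e3 q) 0 := by
      simpa using ((hasDerivAt_id (0:ℝ)).smul_const (e3 q)).const_add u
    have h1 : HasDerivAt (fun s : ℝ => E.Pt (u + s • e3 q)) (Df (e3 q)) 0 := by
      have hP' : HasFDerivAt E.Pt Df (u + (0:ℝ) • e3 q) := by simpa using hP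
      exact hP'.comp_hasDerivAt (0:ℝ) hcurve
    have h2 : HasDerivAt (fun s : ℝ => (E.Pt (u + s • e3 q)) l) (Df (e3 q) l) 0 := by
      have := ((EuclideanSpace.proj l : V3 →L[ℝ] ℝ).hasFDerivAt).comp_hasDerivAt (0:ℝ) h1
      exact this
    apply deriv_zero_of_right_zero h2
    intro s hs
    have hmem : E.Pt (u + s • e3 q) ∈ faceH (insert i {q}) := hface ⟨_, hsub s hs, rfl⟩
    exact hmem.2 l (by simp [Finset.mem_insert, Finset.mem_singleton, hli, hlq])
  -- abbreviations for matrix entries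
  set a : ℝ := Df (e3 i) i with ha_def
  set b : ℝ := Df (e3 j) i with hb_def
  set d : ℝ := Df (e3 j) j with hd_def
  set f : ℝ := Df (e3 k) k with hf_def
  set c0 : ℝ := Df (e3 k) i with hc0_def
  have hjac : ∀ p q : Fin 3, jacM E.Pt u p q = Df (e3 q) p := by
    intro p q; simp [jacM, hDf_def]
  have ha : 0 < a := by have := (E.h4_diag i).1; rwa [hjac i i] at this
  have hb : b < 0 := by have := E.h4_off i j hji; rwa [hjac i j] at this
  -- vector extensionality and decomposition
  have vext : ∀ v w : V3, v i = w i → v j = w j → v k = w k → v = w := by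
    intro v w h1 h2 h3
    refine PiLp.ext fun l => ?_
    rcases hcover l with rfl | rfl | rfl <;> assumption
  have hdecomp : ∀ v : V3, v = v i • e3 i + v j • e3 j + v k • e3 k := by
    intro v
    apply vext <;>
      simp [e3, PiLp.add_apply, PiLp.smul_apply, EuclideanSpace.single_apply,
        hji, hki, hkj, Ne.symm hji, Ne.symm hki, Ne.symm hkj]
  have hDapp : ∀ v : V3, ∀ l : Fin 3,
      Df v l = v i * Df (e3 i) l + v j * Df (e3 j) l + v k * Df (e3 k) l := by
    intro v l
    conv_lhs => rw [hdecomp v]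
    rw [map_add, map_add, Df.map_smul, Df.map_smul, Df.map_smul]
    simp [PiLp.add_apply, PiLp.smul_apply]
  have hDi : ∀ v : V3, Df v i = v i * a + v j * b + v k * c0 := by
    intro v; rw [hDapp v i]
  have hDj : ∀ v : V3, Df v j = v j * d := by
    intro v
    rw [hDapp v j, hcol i j hji hji, hcol k j hji (Ne.symm hkj)]
    ring
  have hDk : ∀ v : V3, Df v k = v k * f := by
    intro v
    rw [hDapp v k, hcol i k hki hki, hcol j k hki hkj]
    ring
  -- the global attractor and the carrying simplex
  obtain ⟨hcpt, hSoct, hS0, hSinv, hhomeo, hord, hord2, hOm, hGcpt, hGinv, hattr⟩ := hS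
  set G : Set V3 := gammaOf S with hG_def
  have hSsubG : S ⊆ G := by
    intro x hx
    exact ⟨1, ⟨zero_le_one, le_rfl⟩, x, hx, (one_smul ℝ x).symm⟩
  have hGoct : G ⊆ octC := by
    rintro y ⟨α, hα, x, hx, rfl⟩ l
    have := hSoct hx l
    simp only [PiLp.smul_apply, smul_eq_mul]
    exact mul_nonneg hα.1 this
  have hGQ : ∀ y ∈ G, E.Qt y ∈ G := by
    intro y hy
    have : y ∈ E.Pt '' G := by rw [hGinv]; exact hy
    obtain ⟨z, hz, rfl⟩ := this
    rw [E.left_inv z (E.octSubU (hGoct hz))]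
    exact hz
  have huS : ∀ p : Fin 3, E.u p ∈ S := by
    intro p
    have hpC : E.u p ∈ octC := (E.h4_mem p).1.1
    have hpne : E.u p ≠ 0 := by
      intro h0
      have := (E.h4_mem p).2 p (Finset.mem_singleton_self p)
      rw [h0] at this
      simp at this
    apply hOm (E.u p) hpC hpne
    refine ⟨id, strictMono_id, ?_⟩
    have : ∀ n : ℕ, E.Pt^[n] (E.u p) = E.u p := fun n =>
      Function.iterate_fixed (E.h4_fix p) n
    simp only [id_eq, this]
    exact tendsto_const_nhds
  have huG : u ∈ G := hSsubG (huS i)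
  -- the tangent cone K of G at u
  set Kgen : Set V3 := {v | ∃ t : ℝ, 0 ≤ t ∧ ∃ y ∈ G, v = t • (y - u)} with hKgen_def
  set K : Set V3 := closure Kgen with hK_def
  have hwkgen : ∀ p : Fin 3, E.u p - u ∈ Kgen := by
    intro p
    exact ⟨1, zero_le_one, E.u p, hSsubG (huS p), (one_smul ℝ _).symm⟩
  have hcont : ∀ l : Fin 3, Continuous fun v : V3 => v l := by
    intro l
    exact (EuclideanSpace.proj (𝕜 := ℝ) l : V3 →L[ℝ] ℝ).continuous
  have hK_nonneg : ∀ l : Fin 3, l ≠ i → ∀ v ∈ K, 0 ≤ v l := by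
    intro l hl v hv
    have hsub : Kgen ⊆ {v : V3 | 0 ≤ v l} := by
      rintro _ ⟨t, ht, y, hy, rfl⟩
      have h1 : 0 ≤ y l := hGoct hy l
      have h2 : u l = 0 := hul l hl
      simp only [Set.mem_setOf_eq, PiLp.smul_apply, PiLp.sub_apply, smul_eq_mul, h2, sub_zero]
      exact mul_nonneg ht h1
    have hcl : IsClosed {v : V3 | 0 ≤ v l} := isClosed_le continuous_const (hcont l)
    exact closure_minimal hsub hcl hv
  have hKgen_add : ∀ v ∈ Kgen, ∀ w ∈ Kgen, v + w ∈ Kgen := by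
    rintro _ ⟨t₁, ht₁, y₁, hy₁, rfl⟩ _ ⟨t₂, ht₂, y₂, hy₂, rfl⟩
    rcases eq_or_lt_of_le (add_nonneg ht₁ ht₂ : (0:ℝ) ≤ t₁ + t₂) with h | h
    · have h1 : t₁ = 0 := by linarith
      have h2 : t₂ = 0 := by linarith
      refine ⟨0, le_rfl, y₁, hy₁, ?_⟩
      simp [h1, h2]
    · have hs : t₁ + t₂ ≠ 0 := ne_of_gt h
      refine ⟨t₁ + t₂, le_of_lt h, (t₁ / (t₁ + t₂)) • y₁ + (t₂ / (t₁ + t₂)) • y₂, ?_, ?_⟩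
      · apply hconv hy₁ hy₂ (div_nonneg ht₁ (le_of_lt h)) (div_nonneg ht₂ (le_of_lt h))
        field_simp
      · match_scalars <;> (field_simp; try ring)
  have hK_add : ∀ v ∈ K, ∀ w ∈ K, v + w ∈ K := by
    intro v hv w hw
    obtain ⟨sv, hsv, hsvt⟩ := mem_closure_iff_seq_limit.1 hv
    obtain ⟨sw, hsw, hswt⟩ := mem_closure_iff_seq_limit.1 hw
    apply mem_closure_of_tendsto (hsvt.add hswt)
    filter_upwards with n
    exact hKgen_add _ (hsv n) _ (hsw n)
  have hKgen_smul : ∀ t : ℝ, 0 ≤ t → ∀ v ∈ Kgen, t • v ∈ Kgen := by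
    rintro t ht _ ⟨t', ht', y, hy, rfl⟩
    exact ⟨t * t', mul_nonneg ht ht', y, hy, smul_smul t t' _⟩
  have hK_smul : ∀ t : ℝ, 0 ≤ t → ∀ v ∈ K, t • v ∈ K := by
    intro t ht v hv
    obtain ⟨sv, hsv, hsvt⟩ := mem_closure_iff_seq_limit.1 hv
    apply mem_closure_of_tendsto (hsvt.const_smul t)
    filter_upwards with n
    exact hKgen_smul t ht _ (hsv n)
  -- invariance of K under m
  have hKm : ∀ v ∈ K, m v ∈ K := by
    have hgen : ∀ y ∈ G, m (y - u) ∈ K := by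
      intro y hy
      have hc : Filter.Tendsto (fun n : ℕ => ‖((n:ℝ) + 1)‖) Filter.atTop Filter.atTop := by
        have h1 : Filter.Tendsto (fun n : ℕ => (n:ℝ) + 1) Filter.atTop Filter.atTop :=
          Filter.tendsto_atTop_add_const_right _ 1 tendsto_natCast_atTop_atTop
        exact h1.congr fun n => (Real.norm_of_nonneg (by positivity)).symm
      have hlim := hQ.lim (y - u) hc
      apply mem_closure_of_tendsto hlim
      filter_upwards with n
      have hn1 : (0:ℝ) < (n:ℝ) + 1 := by positivity
      have hsle : ((n:ℝ) + 1)⁻¹ ≤ 1 := by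
        rw [inv_le_one_iff₀]
        right
        linarith [Nat.cast_nonneg (α := ℝ) n]
      have hz : u + ((n:ℝ) + 1)⁻¹ • (y - u) ∈ G := by
        have hcomb := hconv huG hy (by linarith : (0:ℝ) ≤ 1 - ((n:ℝ) + 1)⁻¹)
          (by positivity : (0:ℝ) ≤ ((n:ℝ) + 1)⁻¹) (by ring)
        have heq : u + ((n:ℝ) + 1)⁻¹ • (y - u)
            = (1 - ((n:ℝ) + 1)⁻¹) • u + ((n:ℝ) + 1)⁻¹ • y := by module
        rw [heq]
        exact hcomb
      rw [hQu]
      exact ⟨(n:ℝ) + 1, by positivity, E.Qt _, hGQ _ hz, rfl⟩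
    have hgen2 : ∀ v ∈ Kgen, m v ∈ K := by
      rintro _ ⟨t, ht, y, hy, rfl⟩
      rw [m.map_smul]
      exact hK_smul t ht _ (hgen y hy)
    intro v hv
    obtain ⟨sv, hsv, hsvt⟩ := mem_closure_iff_seq_limit.1 hv
    have hten : Filter.Tendsto (fun n => m (sv n)) Filter.atTop (nhds (m v)) :=
      (m.continuous.tendsto v).comp hsvt
    have hmem : ∀ n, m (sv n) ∈ K := fun n => hgen2 _ (hsv n)
    have hcl := mem_closure_of_tendsto hten (Filter.Eventually.of_forall hmem)
    rw [hK_def] at hcl ⊢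
    rwa [closure_closure] at hcl
  -- the generator w from u j
  set w : V3 := E.u j - u with hw_def
  have hwK : w ∈ K := subset_closure (hwkgen j)
  set wj : ℝ := E.u j j with hwj_def
  have hwjpos : 0 < wj := (E.h4_mem j).2 j (Finset.mem_singleton_self j)
  have hujl : ∀ l : Fin 3, l ≠ j → E.u j l = 0 := by
    intro l hl
    exact (E.h4_mem j).1.2 l (by simp [hl])
  have hwi : w i = -(u i) := by
    simp [hw_def, PiLp.sub_apply, hujl i (Ne.symm hji)]
  have hwj : w j = wj := by
    simp [hw_def, hwj_def, PiLp.sub_apply, hul j hji]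
  have hwk : w k = 0 := by
    simp [hw_def, PiLp.sub_apply, hujl k hkj, hul k hki]
  -- d > 0
  have hd : 0 < d := by
    have hv1 : m w ∈ K := hKm w hwK
    have hval : Df (m w) = w := hPQ w
    have hj : w j = (m w) j * d := by rw [← hDj (m w), hval]
    have hnn : 0 ≤ (m w) j := hK_nonneg j hji _ hv1
    by_contra hdle
    push_neg at hdle
    have : (m w) j * d ≤ 0 := mul_nonpos_of_nonneg_of_nonpos hnn hdle
    rw [← hj, hwj] at this
    linarith
  -- f ≠ 0
  have hf : f ≠ 0 := by
    intro hf0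
    set z : V3 := a • e3 k - c0 • e3 i with hz_def
    have hzi : z i = -c0 := by
      simp [hz_def, e3, PiLp.sub_apply, PiLp.smul_apply, EuclideanSpace.single_apply, hji, hki, hkj, Ne.symm hji, Ne.symm hki, Ne.symm hkj]
    have hzj : z j = 0 := by
      simp [hz_def, e3, PiLp.sub_apply, PiLp.smul_apply, EuclideanSpace.single_apply, hji, hki, hkj, Ne.symm hji, Ne.symm hki, Ne.symm hkj]
    have hzk : z k = a := by
      simp [hz_def, e3, PiLp.sub_apply, PiLp.smul_apply, EuclideanSpace.single_apply, hji, hki, hkj, Ne.symm hji, Ne.symm hki, Ne.symm hkj]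
    have hz0 : Df z = 0 := by
      apply vext
      · rw [hDi z, hzi, hzj, hzk]; ring_nf; simp
      · rw [hDj z, hzj]; simp
      · rw [hDk z, hzk, hf0]; simp
    have : z = 0 := by
      have := hQP z
      rw [hz0, map_zero] at this
      exact this.symm
    have : z k = 0 := by rw [this]; simp
    rw [hzk] at this
    exact ne_of_gt ha this
  -- main contradiction: assume d ≤ a
  by_contra hlt
  push_neg at hlt
  rw [hjac i i, hjac j j] at hlt
  have hda : d ≤ a := hlt
  -- the iterated sequence
  set vs : ℕ → V3 := fun n => m^[n] w with hvs_def
  have hvs_succ : ∀ n, vs (n + 1) = m (vs n) := by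
    intro n
    simp [hvs_def, Function.iterate_succ_apply']
  set β : ℝ := (-b) * wj / d with hβ_def
  have hβpos : 0 < β := by
    apply div_pos (mul_pos (by linarith) hwjpos) hd
  have hmain : ∀ n : ℕ, vs n ∈ K ∧ vs n k = 0 ∧ vs n j * d ^ n = wj ∧
      -(u i) + n * β ≤ a ^ n * vs n i := by
    intro n
    induction n with
    | zero =>
      refine ⟨by simpa [hvs_def] using hwK, by simpa [hvs_def] using hwk, ?_, ?_⟩
      · simp [hvs_def, hwj]
      · norm_num [hvs_def, hwi]
    | succ n ih =>
      obtain ⟨ihK, ihk, ihj, ihi⟩ := ih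
      have hstep : vs (n + 1) = m (vs n) := hvs_succ n
      have hvK : vs (n + 1) ∈ K := by rw [hstep]; exact hKm _ ihK
      have hval : Df (vs (n + 1)) = vs n := by rw [hstep]; exact hPQ _
      have hk0 : vs (n + 1) k = 0 := by
        have h1 : vs n k = vs (n + 1) k * f := by rw [← hDk (vs (n + 1)), hval]
        rw [ihk] at h1
        rcases mul_eq_zero.1 h1.symm with h | h
        · exact h
        · exact absurd h hf
      have hj1 : vs (n + 1) j * d ^ (n + 1) = wj := by
        have h1 : vs n j = vs (n + 1) j * d := by rw [← hDj (vs (n + 1)), hval]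
        rw [← ihj, h1]
        ring
      have hi1 : vs n i = vs (n + 1) i * a + vs (n + 1) j * b := by
        have h2 := hDi (vs (n + 1))
        rw [hval, hk0] at h2
        linarith [h2]
      have hdn1 : 0 < d ^ (n + 1) := pow_pos hd (n + 1)
      have hvj' : vs (n + 1) j = wj / d ^ (n + 1) :=
        eq_div_of_mul_eq (ne_of_gt hdn1) hj1
      have hpow : d ^ n ≤ a ^ n := pow_le_pow_left₀ hd.le hda n
      have hcpos : 0 < (-b) * wj * d := by
        apply mul_pos (mul_pos (by linarith) hwjpos) hd
      have hkey : (-b) * wj / d ≤ (-b) * (vs (n + 1) j) * a ^ n := by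
        rw [hvj']
        have heq2 : (-b) * (wj / d ^ (n + 1)) * a ^ n
            = ((-b) * wj * a ^ n) / d ^ (n + 1) := by ring
        rw [heq2, div_le_div_iff₀ hd hdn1]
        have hmul := mul_le_mul_of_nonneg_left hpow (le_of_lt hcpos)
        calc (-b) * wj * d ^ (n + 1) = ((-b) * wj * d) * d ^ n := by ring
          _ ≤ ((-b) * wj * d) * a ^ n := hmul
          _ = (-b) * wj * a ^ n * d := by ring
      have hrw : a ^ (n + 1) * vs (n + 1) i
          = a ^ n * vs n i + (-b) * (vs (n + 1) j) * a ^ n := by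
        rw [hi1, pow_succ]
        ring
      have hβ : (-b) * wj / d = β := by rw [hβ_def]
      refine ⟨hvK, hk0, hj1, ?_⟩
      push_cast
      rw [hrw]
      rw [hβ] at hkey
      push_cast at ihi
      have hexp : ((n:ℝ) + 1) * β = (n:ℝ) * β + β := by ring
      rw [hexp]
      linarith
  -- choose n with positive i component
  obtain ⟨n, hn⟩ := exists_nat_gt (u i / β)
  obtain ⟨hvK, hvk, hvj, hvi⟩ := hmain n
  have hxn : 0 < vs n i := by
    have h1 : u i < n * β := by
      rw [div_lt_iff₀ hβpos] at hn
      linarith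
    have h2 : 0 < a ^ n * vs n i := by linarith
    have hp := pow_pos ha n
    by_contra hle
    push_neg at hle
    have := mul_nonpos_of_nonneg_of_nonpos hp.le hle
    linarith
  have hvjpos : 0 < vs n j := by
    have hdn : 0 < d ^ n := pow_pos hd n
    by_contra hle
    push_neg at hle
    have : vs n j * d ^ n ≤ 0 := mul_nonpos_of_nonpos_of_nonneg hle hdn.le
    rw [hvj] at this
    linarith
  -- add a bit of the k direction
  set t : ℝ := vs n i / (2 * u i) with ht_def
  have htpos : 0 < t := div_pos hxn (by linarith)
  set wk : V3 := E.u k - u with hwk_def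
  have hwkK : wk ∈ K := subset_closure (hwkgen k)
  have hukl : ∀ l : Fin 3, l ≠ k → E.u k l = 0 := by
    intro l hl
    exact (E.h4_mem k).1.2 l (by simp [hl])
  have hwki : wk i = -(u i) := by
    simp [hwk_def, PiLp.sub_apply, hukl i (Ne.symm hki)]
  have hwkj : wk j = 0 := by
    simp [hwk_def, PiLp.sub_apply, hukl j (Ne.symm hkj), hul j hji]
  have hwkk : wk k = E.u k k := by
    simp [hwk_def, PiLp.sub_apply, hul k hki]
  have hwkkpos : 0 < E.u k k := (E.h4_mem k).2 k (Finset.mem_singleton_self k)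
  set v' : V3 := vs n + t • wk with hv'_def
  have hv'K : v' ∈ K := hK_add _ hvK _ (hK_smul t (le_of_lt htpos) _ hwkK)
  have hv'i : 0 < v' i := by
    have : v' i = vs n i + t * (-(u i)) := by
      simp [hv'_def, PiLp.add_apply, PiLp.smul_apply, hwki]
    rw [this, ht_def]
    field_simp
    linarith
  have hv'j : 0 < v' j := by
    have : v' j = vs n j := by
      simp [hv'_def, PiLp.add_apply, PiLp.smul_apply, hwkj]
    rw [this]; exact hvjpos
  have hv'k : 0 < v' k := by
    have : v' k = t * E.u k k := by
      simp [hv'_def, PiLp.add_apply, PiLp.smul_apply, hwkk, hvk]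
    rw [this]
    exact mul_pos htpos hwkkpos
  -- extract a point of S strictly dominating u
  have hO : IsOpen {z : V3 | 0 < z i ∧ 0 < z j ∧ 0 < z k} := by
    apply IsOpen.inter (isOpen_lt continuous_const (hcont i))
    exact IsOpen.inter (isOpen_lt continuous_const (hcont j))
      (isOpen_lt continuous_const (hcont k))
  obtain ⟨g, hgO, hgKgen⟩ :=
    mem_closure_iff.1 hv'K _ hO ⟨hv'i, hv'j, hv'k⟩
  obtain ⟨s, hs, y, hy, rfl⟩ := hgKgen
  obtain ⟨hgi, hgj, hgk⟩ := hgO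
  have hspos : 0 < s := by
    rcases eq_or_lt_of_le hs with h | h
    · exfalso
      rw [← h] at hgi
      simp at hgi
    · exact h
  have hyg : ∀ l : Fin 3, l ≠ i → 0 < y l := by
    intro l hl
    have h1 : 0 < s * (y l - u l) := by
      rcases hcover l with rfl | rfl | rfl
      · exact absurd rfl hl
      · simpa [PiLp.smul_apply, PiLp.sub_apply] using hgj
      · simpa [PiLp.smul_apply, PiLp.sub_apply] using hgk
    have h2 : 0 < y l - u l := by
      by_contra hle
      push_neg at hle
      have := mul_nonpos_of_nonneg_of_nonpos hs hle
      linarith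
    rw [hul l hl] at h2
    linarith
  have hyi : u i < y i := by
    have h1 : 0 < s * (y i - u i) := by
      simpa [PiLp.smul_apply, PiLp.sub_apply] using hgi
    have h2 : 0 < y i - u i := by
      by_contra hle
      push_neg at hle
      have := mul_nonpos_of_nonneg_of_nonpos hs hle
      linarith
    linarith
  obtain ⟨α, hα, x, hxS, rfl⟩ := hy
  have hαpos : 0 < α := by
    rcases eq_or_lt_of_le hα.1 with h | h
    · exfalso
      have : (0:ℝ) • x = (0:V3) := zero_smul ℝ x
      rw [← h] at hyi
      have hyi' : u i < ((0:ℝ) • x) i := hyi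
      rw [this] at hyi'
      simp at hyi'
      linarith
    · exact h
  have hxdom : ∀ l : Fin 3, u l < x l := by
    intro l
    have hxl : 0 ≤ x l := hSoct hxS l
    have hyx : (α • x) l = α * x l := by simp [PiLp.smul_apply]
    have hle1 : α * x l ≤ x l := by
      have := mul_le_mul_of_nonneg_right hα.2 hxl
      linarith
    by_cases hl : l = i
    · subst hl
      rw [hyx] at hyi
      linarith
    · have := hyg l hl
      rw [hyx] at this
      rw [hul l hl]
      linarith
  have hxne : u ≠ x := by
    intro h
    have := hxdom i
    rw [← h] at this
    exact lt_irrefl _ this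
  exact hord u (huS i) x hxS hxne hxdom
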